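/- Let X be a nonnegative random variable with cumulative distribution function F, finite second moment E[X²] = ∫₀^∞ 2x(1 − F(x)) dx, and suppose X is DFR, i.e. the survival function 1 − F is log-convex on [0, ∞) (equivalently, for every x ≥ 0 the ratio (1 − F(t + x))/(1 − F(t)) is nondecreasing in t on the set where 1 − F(t) > 0). Then the cumulative entropy of X satisfies the lower bound 𝓒𝓔(X) ≥ E[X] − (√(E[X²])/√2)·(2 − π²/6). -/

import Mathlib

open Real MeasureTheory ProbabilityTheory Set Filter

lemma aux_telescope : HasSum (fun n : ℕ => (1:ℝ)/((n+1)*(n+2))) 1 := by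
  have h : ∀ n : ℕ, (1:ℝ)/((n+1)*(n+2)) = (fun k : ℕ => (1:ℝ)/(k+1)) n - (fun k : ℕ => (1:ℝ)/(k+1)) (n+1) := by
    intro n
    have h1 : ((n:ℝ)+1) ≠ 0 := by positivity
    have h2 : ((n:ℝ)+2) ≠ 0 := by positivity
    field_simp
    push_cast
    ring
  rw [(hasSum_iff_tendsto_nat_of_nonneg (fun n => by positivity) 1)]
  have heq : ∀ N : ℕ, ∑ i ∈ Finset.range N, (1:ℝ)/((i+1)*(i+2)) = 1 - 1/(N+1) := by
    intro N
    rw [Finset.sum_congr rfl (fun i _ => h i), Finset.sum_range_sub']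
    norm_num
  simp only [heq]
  have h0 : Tendsto (fun N : ℕ => (1:ℝ)/(N+1)) atTop (nhds 0) := tendsto_one_div_add_atTop_nhds_zero_nat
  simpa using (tendsto_const_nhds (x := (1:ℝ))).sub h0

lemma aux_basel_shift : HasSum (fun n : ℕ => (1:ℝ)/((n:ℝ)+2)^2) (π^2/6 - 1) := by
  have h1 : HasSum (fun n : ℕ => (1:ℝ)/(((n+2):ℕ):ℝ)^2) (π^2/6-1) := by
    rw [hasSum_nat_add_iff (f := fun n : ℕ => (1:ℝ)/(n:ℝ)^2) 2]
    convert hasSum_zeta_two using 1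
    · rfl
    norm_num [Finset.sum_range_succ]
  convert h1 using 2 with n
  push_cast
  ring

lemma aux_coef : HasSum (fun n : ℕ => (1:ℝ)/(((n:ℝ)+1)*((n:ℝ)+2)^2)) (2 - π^2/6) := by
  have h := aux_telescope.sub aux_basel_shift
  have he : (1:ℝ) - (π^2/6 - 1) = 2 - π^2/6 := by ring
  rw [he] at h
  convert h using 2 with n
  · rfl
  have h1 : ((n:ℝ)+1) ≠ 0 := by positivity
  have h2 : ((n:ℝ)+2) ≠ 0 := by positivity
  field_simp
  ring


lemma aux_series {s : ℝ} (h0 : 0 ≤ s) (h1 : s ≤ 1) :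
    HasSum (fun n : ℕ => s^(n+2) / (((n:ℝ)+1)*((n:ℝ)+2))) (s + (1-s)*Real.log (1-s)) := by
  rcases eq_or_lt_of_le h1 with rfl | h1
  · simpa using aux_telescope
  · have habs : |s| < 1 := abs_lt.2 ⟨by linarith, h1⟩
    have h := hasSum_pow_div_log_of_abs_lt_one habs
    have hA : HasSum (fun n : ℕ => s^(n+2)/((n:ℝ)+1)) (-(s * Real.log (1-s))) := by
      convert h.mul_left s using 1
      · rfl
      · funext n; rw [pow_succ]; ring
      · ring
    have hB : HasSum (fun n : ℕ => s^(n+2)/((n:ℝ)+2)) (-Real.log (1-s) - s) := by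
      have hh : HasSum (fun n : ℕ => s^((n+1)+1)/(((n+1):ℕ)+1)) (-Real.log (1-s) - s) := by
        rw [hasSum_nat_add_iff (f := fun n : ℕ => s^(n+1)/((n:ℝ)+1)) 1]
        convert h using 1
        · rfl
        simp
      convert hh using 1
      funext n; push_cast; ring_nf
    convert hA.sub hB using 1
    · rfl
    · funext n
      have hn1 : ((n:ℝ)+1) ≠ 0 := by positivity
      have hn2 : ((n:ℝ)+2) ≠ 0 := by positivity
      field_simp
      ring
    · ring

lemma aux_L1 (S : ℝ → ℝ) (hmeas : Measurable S) (hnn : ∀ x, 0 ≤ S x)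
    (hNWU : ∀ x, 0 ≤ x → ∀ t, 0 ≤ t → S t * S x ≤ S (t + x))
    (hS_int : IntegrableOn S (Ioi 0) volume)
    (hxS_int : IntegrableOn (fun x => x * S x) (Ioi 0) volume) :
    (∫ x in Ioi 0, S x) ^ 2 ≤ ∫ x in Ioi 0, x * S x := by
  set ν := volume.restrict (Ioi (0:ℝ)) with hν
  set Se : ℝ → ENNReal := fun x => ENNReal.ofReal (S x) with hSe
  have hSemeas : Measurable Se := ENNReal.measurable_ofReal.comp hmeas
  set I := ∫ x in Ioi 0, S x with hI
  set J := ∫ x in Ioi 0, x * S x with hJ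
  have hI0 : 0 ≤ I := setIntegral_nonneg measurableSet_Ioi (fun x _ => hnn x)
  have hJ0 : 0 ≤ J := setIntegral_nonneg measurableSet_Ioi
    (fun x hx => mul_nonneg (le_of_lt hx) (hnn x))
  have e1 : ∫⁻ x, Se x ∂ν = ENNReal.ofReal I :=
    (ofReal_integral_eq_lintegral_ofReal hS_int
      (Filter.Eventually.of_forall (fun x => hnn x))).symm
  -- the G kernel
  set G : ℝ → ℝ → ENNReal := fun t v => if t < v then Se v else 0 with hG
  have hGmeas : Measurable (Function.uncurry G) :=
    Measurable.ite (measurableSet_lt measurable_fst measurable_snd)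
      (hSemeas.comp measurable_snd) measurable_const
  have claimA : ∀ t : ℝ, 0 ≤ t → ∫⁻ v in Ioi t, Se v ∂volume = ∫⁻ v, G t v ∂ν := by
    intro t ht
    have h1 : ∀ v, G t v = (Ioi t).indicator Se v := by
      intro v
      simp only [hG, indicator_apply, mem_Ioi]
    refine Eq.symm ?_
    calc ∫⁻ v, G t v ∂ν = ∫⁻ v, (Ioi t).indicator Se v ∂ν := by simp_rw [h1]
      _ = ∫⁻ v in Ioi t, Se v ∂ν := lintegral_indicator measurableSet_Ioi _
      _ = ∫⁻ v in Ioi t ∩ Ioi 0, Se v ∂volume := by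
          rw [hν, Measure.restrict_restrict measurableSet_Ioi]
      _ = ∫⁻ v in Ioi t, Se v ∂volume := by
          have he : Ioi t ∩ Ioi (0:ℝ) = Ioi t :=
            inter_eq_left.mpr (fun v hv => lt_of_le_of_lt ht hv)
          rw [he]
  have claimB : ∀ v : ℝ, v ∈ Ioi (0:ℝ) → ∫⁻ t, G t v ∂ν = Se v * ENNReal.ofReal v := by
    intro v hv
    have h1 : ∀ t, G t v = (Iio v).indicator (fun _ => Se v) t := by
      intro t
      simp only [hG, indicator_apply, mem_Iio]
    calc ∫⁻ t, G t v ∂ν = ∫⁻ t, (Iio v).indicator (fun _ => Se v) t ∂ν := by simp_rw [h1]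
      _ = ∫⁻ t in Iio v, Se v ∂ν := lintegral_indicator measurableSet_Iio _
      _ = Se v * ν (Iio v) := by rw [setLIntegral_const]
      _ = Se v * ENNReal.ofReal v := by
          rw [hν, Measure.restrict_apply measurableSet_Iio]
          congr 1
          have : Iio v ∩ Ioi 0 = Ioo 0 v := by ext y; simp [mem_Ioo, and_comm]
          rw [this, Real.volume_Ioo, sub_zero]
  -- step 2 pointwise
  have step2 : ∀ t ∈ Ioi (0:ℝ), Se t * ENNReal.ofReal I ≤ ∫⁻ v in Ioi t, Se v ∂volume := by
    intro t ht
    have ht' : (0:ℝ) ≤ t := le_of_lt ht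
    have htrans : ∫⁻ u in Ioi (0:ℝ), Se (t + u) ∂volume = ∫⁻ v in Ioi t, Se v ∂volume := by
      have hemb : MeasurableEmbedding (fun u : ℝ => t + u) := measurableEmbedding_addLeft t
      have hmp : MeasurePreserving (fun u : ℝ => t + u) volume volume :=
        measurePreserving_add_left volume t
      have hpre : (fun u : ℝ => t + u) ⁻¹' (Ioi t) = Ioi 0 := by
        ext u; simp [mem_Ioi]
      rw [← hpre]
      exact hmp.setLIntegral_comp_preimage_emb hemb Se (Ioi t)
    calc Se t * ENNReal.ofReal I = Se t * ∫⁻ u, Se u ∂ν := by rw [e1]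
      _ = ∫⁻ u, Se t * Se u ∂ν := (lintegral_const_mul _ hSemeas).symm
      _ ≤ ∫⁻ u, Se (t + u) ∂ν := by
          refine lintegral_mono_ae ?_
          rw [hν, ae_restrict_iff' measurableSet_Ioi]
          refine Filter.Eventually.of_forall (fun u hu => ?_)
          rw [hSe]
          simp only []
          rw [← ENNReal.ofReal_mul (hnn t)]
          exact ENNReal.ofReal_le_ofReal (hNWU u (le_of_lt hu) t ht')
      _ = ∫⁻ v in Ioi t, Se v ∂volume := htrans
  -- chain
  have chain : ENNReal.ofReal I * ENNReal.ofReal I ≤ ENNReal.ofReal J := by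
    calc ENNReal.ofReal I * ENNReal.ofReal I
        = ∫⁻ t, Se t * ENNReal.ofReal I ∂ν := by
          rw [lintegral_mul_const _ hSemeas, e1]
      _ ≤ ∫⁻ t, (∫⁻ v, G t v ∂ν) ∂ν := by
          refine lintegral_mono_ae ?_
          rw [hν, ae_restrict_iff' measurableSet_Ioi]
          refine Filter.Eventually.of_forall (fun t ht => ?_)
          rw [← claimA t (le_of_lt ht)]
          exact step2 t ht
      _ = ∫⁻ v, (∫⁻ t, G t v ∂ν) ∂ν := lintegral_lintegral_swap (hGmeas.aemeasurable)
      _ = ∫⁻ v, Se v * ENNReal.ofReal v ∂ν := by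
          refine setLIntegral_congr_fun measurableSet_Ioi ?_
          exact (fun v hv => claimB v hv)
      _ = ∫⁻ v, ENNReal.ofReal (v * S v) ∂ν := by
          refine setLIntegral_congr_fun measurableSet_Ioi ?_
          intro v hv
          beta_reduce
          rw [ENNReal.ofReal_mul (le_of_lt hv), mul_comm]
      _ = ENNReal.ofReal J :=
          (ofReal_integral_eq_lintegral_ofReal hxS_int
            ((ae_restrict_iff' measurableSet_Ioi).mpr (Filter.Eventually.of_forall
                (fun v hv => mul_nonneg (le_of_lt hv) (hnn v))))).symm
  rw [← ENNReal.ofReal_mul hI0] at chain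
  have := (ENNReal.ofReal_le_ofReal_iff hJ0).mp chain
  nlinarith [this]


lemma aux_L2 (S : ℝ → ℝ) (hmeas : Measurable S) (h0 : ∀ x, 0 ≤ S x) (h1 : ∀ x, S x ≤ 1)
    (hpow : ∀ x, 0 ≤ x → ∀ n : ℕ, S x ^ (n+2) ≤ S (((n:ℝ)+2)*x))
    (hS_int : IntegrableOn S (Ioi 0) volume) :
    IntegrableOn (fun x => S x + (1 - S x) * Real.log (1 - S x)) (Ioi 0) volume ∧
    ∫ x in Ioi 0, (S x + (1 - S x) * Real.log (1 - S x))
      ≤ (∫ x in Ioi 0, S x) * (2 - π^2/6) := by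
  set ν := volume.restrict (Ioi (0:ℝ)) with hν
  set I := ∫ x in Ioi 0, S x with hI
  have hI0 : 0 ≤ I := setIntegral_nonneg measurableSet_Ioi (fun x _ => h0 x)
  set g : ℝ → ℝ := fun x => S x + (1 - S x) * Real.log (1 - S x) with hg
  have hgmeas : Measurable g :=
    hmeas.add ((measurable_const.sub hmeas).mul (Real.measurable_log.comp
      (measurable_const.sub hmeas)))
  have hsum : ∀ x : ℝ, HasSum (fun n : ℕ => S x^(n+2) / (((n:ℝ)+1)*((n:ℝ)+2))) (g x) :=
    fun x => aux_series (h0 x) (h1 x)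
  have hgnn : ∀ x, 0 ≤ g x := by
    intro x
    refine hasSum_le (fun n => ?_) hasSum_zero (hsum x)
    have := h0 x
    positivity
  -- pointwise bound
  have hpt : ∀ x : ℝ, 0 < x → ENNReal.ofReal (g x)
      ≤ ∑' n : ℕ, ENNReal.ofReal (S (((n:ℝ)+2)*x) / (((n:ℝ)+1)*((n:ℝ)+2))) := by
    intro x hx
    rw [← (hsum x).tsum_eq, ENNReal.ofReal_tsum_of_nonneg
      (fun n => by have := h0 x; positivity) (hsum x).summable]
    refine ENNReal.tsum_le_tsum (fun n => ENNReal.ofReal_le_ofReal ?_)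
    have hden : (0:ℝ) < ((n:ℝ)+1)*((n:ℝ)+2) := by positivity
    gcongr
    exact hpow x hx.le n
  -- the series integral
  have hint_n : ∀ n : ℕ, IntegrableOn (fun x => S (((n:ℝ)+2)*x)) (Ioi 0) volume := by
    intro n
    have hpos : (0:ℝ) < (n:ℝ)+2 := by positivity
    have := (integrableOn_Ioi_comp_mul_left_iff S 0 hpos).mpr
    simp only [mul_zero] at this
    exact this hS_int
  have hval : ∀ n : ℕ, ∫ x in Ioi 0, S (((n:ℝ)+2)*x) / (((n:ℝ)+1)*((n:ℝ)+2))
      = I * (1/(((n:ℝ)+1)*((n:ℝ)+2)^2)) := by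
    intro n
    have hpos : (0:ℝ) < (n:ℝ)+2 := by positivity
    rw [integral_div, integral_comp_mul_left_Ioi S 0 hpos]
    simp only [mul_zero, smul_eq_mul]
    rw [← hI]
    field_simp
  have hTeq : ∫⁻ x, (∑' n : ℕ, ENNReal.ofReal (S (((n:ℝ)+2)*x) / (((n:ℝ)+1)*((n:ℝ)+2)))) ∂ν
      = ENNReal.ofReal (I * (2 - π^2/6)) := by
    have hmeas_n : ∀ n : ℕ, AEMeasurable
        (fun x => ENNReal.ofReal (S (((n:ℝ)+2)*x) / (((n:ℝ)+1)*((n:ℝ)+2)))) ν :=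
      fun n => (((hmeas.comp (measurable_id.const_mul ((n:ℝ)+2))).div_const
        _).ennreal_ofReal).aemeasurable
    rw [lintegral_tsum hmeas_n]
    have heach : ∀ n : ℕ, ∫⁻ x, ENNReal.ofReal (S (((n:ℝ)+2)*x) / (((n:ℝ)+1)*((n:ℝ)+2))) ∂ν
        = ENNReal.ofReal (I * (1/(((n:ℝ)+1)*((n:ℝ)+2)^2))) := by
      intro n
      rw [← hval n]
      refine (ofReal_integral_eq_lintegral_ofReal ((hint_n n).div_const _) ?_).symm
      refine Filter.Eventually.of_forall (fun x => ?_)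
      have h2 := h0 (((n:ℝ)+2)*x)
      positivity
    simp_rw [heach]
    have hcoefI := aux_coef.mul_left I
    rw [← ENNReal.ofReal_tsum_of_nonneg (fun n => by positivity) hcoefI.summable,
      hcoefI.tsum_eq]
  have hkey : ∫⁻ x, ENNReal.ofReal (g x) ∂ν ≤ ENNReal.ofReal (I * (2 - π^2/6)) := by
    rw [← hTeq]
    refine lintegral_mono_ae ?_
    rw [hν, ae_restrict_iff' measurableSet_Ioi]
    exact Filter.Eventually.of_forall (fun x hx => hpt x hx)
  have hgae : 0 ≤ᵐ[ν] g := Filter.Eventually.of_forall hgnn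
  have hg_int : IntegrableOn g (Ioi 0) volume := by
    refine ⟨hgmeas.aestronglyMeasurable, ?_⟩
    rw [hasFiniteIntegral_iff_ofReal hgae]
    exact lt_of_le_of_lt hkey ENNReal.ofReal_lt_top
  refine ⟨hg_int, ?_⟩
  have heq : ∫ x in Ioi 0, g x = (∫⁻ x, ENNReal.ofReal (g x) ∂ν).toReal :=
    integral_eq_lintegral_of_nonneg_ae hgae hgmeas.aestronglyMeasurable
  rw [show (∫ x in Ioi 0, (S x + (1 - S x) * Real.log (1 - S x))) = ∫ x in Ioi 0, g x from rfl,
    heq]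
  calc (∫⁻ x, ENNReal.ofReal (g x) ∂ν).toReal
      ≤ (ENNReal.ofReal (I * (2 - π^2/6))).toReal :=
        ENNReal.toReal_mono ENNReal.ofReal_ne_top hkey
    _ ≤ I * (2 - π^2/6) := by
        rw [ENNReal.toReal_ofReal]
        have hc : (0:ℝ) ≤ 2 - π^2/6 := by nlinarith [Real.pi_lt_d2, Real.pi_pos]
        positivity

set_option maxHeartbeats 1000000 in
/-- Let `X` be a nonnegative random variable with cdf `F = cdf μ` and finite
second moment `E[X²] = ∫₀^∞ 2x (1 - F x) dx`, and suppose `X` is DFR: for every `x ≥ 0` the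
ratio `(1 - F (t + x)) / (1 - F t)` is nondecreasing in `t` on the set where `t ≥ 0` and
`1 - F t > 0` (log-convexity of the survival function on `[0, ∞)`). Then the cumulative
entropy satisfies `𝓒𝓔(X) ≥ E[X] - (√(E[X²])/√2) (2 - π²/6)`. -/
theorem ce_ge_of_dfr
    (μ : Measure ℝ) [IsProbabilityMeasure μ] (hnonneg : μ (Set.Iio 0) = 0)
    (hmom2 : IntegrableOn (fun x => 2 * x * (1 - cdf μ x)) (Set.Ioi 0) volume)
    (hdfr : ∀ x : ℝ, 0 ≤ x →
      MonotoneOn (fun t => (1 - cdf μ (t + x)) / (1 - cdf μ t))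
        {t : ℝ | 0 ≤ t ∧ cdf μ t < 1}) :
    -∫ x in Set.Ioi (0 : ℝ), cdf μ x * Real.log (cdf μ x)
      ≥ (∫ x in Set.Ioi (0 : ℝ), (1 - cdf μ x))
          - Real.sqrt (∫ x in Set.Ioi (0 : ℝ), 2 * x * (1 - cdf μ x)) / Real.sqrt 2
              * (2 - Real.pi ^ 2 / 6) := by
  have hc : (0:ℝ) ≤ 2 - Real.pi^2/6 := by nlinarith [Real.pi_lt_d2, Real.pi_pos]
  by_cases hcase : ∀ t, cdf μ t < 1
  swap
  · -- degenerate case : the cdf reaches 1, hence it is 1 on all of (0, ∞)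
    push_neg at hcase
    obtain ⟨t0, ht00⟩ := hcase
    have ht0 : cdf μ t0 = 1 := le_antisymm (cdf_le_one μ t0) ht00
    have hall : ∀ x : ℝ, 0 < x → cdf μ x = 1 := by
      intro x hx
      by_contra hne
      have hFx : cdf μ x < 1 := lt_of_le_of_ne (cdf_le_one μ x) hne
      set T : Set ℝ := {t | cdf μ t = 1} with hT
      have hTne : T.Nonempty := ⟨t0, ht0⟩
      have hlb : ∀ t ∈ T, x ≤ t := by
        intro t ht
        by_contra hlt
        push_neg at hlt
        have := monotone_cdf μ hlt.le
        rw [ht] at this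
        linarith
      have hbdd : BddBelow T := ⟨x, fun t ht => hlb t ht⟩
      set b := sInf T with hb
      have hxb : x ≤ b := le_csInf hTne hlb
      have hbpos : 0 < b := lt_of_lt_of_le hx hxb
      have hgt : ∀ u, b < u → cdf μ u = 1 := by
        intro u hu
        obtain ⟨t, htT, htu⟩ := exists_lt_of_csInf_lt hTne hu
        exact le_antisymm (cdf_le_one μ u) (htT ▸ monotone_cdf μ htu.le)
      have hb1 : cdf μ b = 1 := by
        have hrc : Tendsto (cdf μ) (nhdsWithin b (Ioi b)) (nhds (cdf μ b)) :=
          ((cdf μ).right_continuous b).mono (Ioi_subset_Ici_self)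
        have hconst : (fun u => cdf μ u) =ᶠ[nhdsWithin b (Ioi b)] fun _ => 1 :=
          eventuallyEq_of_mem self_mem_nhdsWithin (fun u hu => hgt u hu)
        have h1 : Tendsto (fun _ : ℝ => (1:ℝ)) (nhdsWithin b (Ioi b)) (nhds (cdf μ b)) :=
          hrc.congr' hconst
        exact tendsto_nhds_unique h1 tendsto_const_nhds
      have hmemb : ∀ t, 0 ≤ t → t < b → t ∈ {t : ℝ | 0 ≤ t ∧ cdf μ t < 1} := by
        intro t ht htb
        refine ⟨ht, ?_⟩
        rcases lt_or_eq_of_le (cdf_le_one μ t) with h | h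
        · exact h
        · exact absurd (csInf_le hbdd (h : cdf μ t = 1)) (not_le.2 htb)
      have h0A : (0:ℝ) ∈ {t : ℝ | 0 ≤ t ∧ cdf μ t < 1} := hmemb 0 le_rfl hbpos
      set t2 := max 0 (b - x) with ht2
      have ht2A : t2 ∈ {t : ℝ | 0 ≤ t ∧ cdf μ t < 1} :=
        hmemb t2 (le_max_left _ _) (max_lt hbpos (by linarith))
      have hmono := hdfr x hx.le h0A ht2A (le_max_left _ _)
      have hbt2 : b ≤ t2 + x := by
        have : b - x ≤ t2 := le_max_right 0 (b - x)
        linarith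
      have hF2 : cdf μ (t2 + x) = 1 :=
        le_antisymm (cdf_le_one μ _) (by rw [← hb1]; exact monotone_cdf μ hbt2)
      have hden0 : 0 < 1 - cdf μ 0 := by
        have := monotone_cdf μ hx.le
        linarith
      have hpos : 0 < (1 - cdf μ (0 + x)) / (1 - cdf μ 0) := by
        rw [zero_add]
        exact div_pos (by linarith) hden0
      simp only [hF2, sub_self, zero_div] at hmono
      linarith
    have e1 : ∫ x in Ioi (0:ℝ), cdf μ x * Real.log (cdf μ x) = 0 := by
      rw [setIntegral_congr_fun measurableSet_Ioi
        (fun x hx => by rw [hall x hx]; simp : EqOn _ (fun _ => (0:ℝ)) _)]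
      simp
    have e2 : ∫ x in Ioi (0:ℝ), (1 - cdf μ x) = 0 := by
      rw [setIntegral_congr_fun measurableSet_Ioi
        (fun x hx => by rw [hall x hx]; ring : EqOn _ (fun _ => (0:ℝ)) _)]
      simp
    have e3 : ∫ x in Ioi (0:ℝ), 2 * x * (1 - cdf μ x) = 0 := by
      rw [setIntegral_congr_fun measurableSet_Ioi
        (fun x hx => by rw [hall x hx]; ring : EqOn _ (fun _ => (0:ℝ)) _)]
      simp
    rw [e1, e2, e3]
    simp
  · -- main case : survival function is everywhere positive
    set S : ℝ → ℝ := fun x => 1 - cdf μ x with hS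
    have hSnn : ∀ x, 0 ≤ S x := fun x => by simp only [hS]; linarith [cdf_le_one μ x]
    have hSle1 : ∀ x, S x ≤ 1 := fun x => by simp only [hS]; linarith [cdf_nonneg μ x]
    have hFmeas : Measurable (fun x => cdf μ x) := (monotone_cdf μ).measurable
    have hSmeas : Measurable S := measurable_const.sub hFmeas
    -- NWU property
    have hNWU : ∀ x, 0 ≤ x → ∀ t, 0 ≤ t → S t * S x ≤ S (t + x) := by
      intro x hx t ht
      have h0A : (0:ℝ) ∈ {t : ℝ | 0 ≤ t ∧ cdf μ t < 1} := ⟨le_rfl, hcase 0⟩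
      have htA : t ∈ {t : ℝ | 0 ≤ t ∧ cdf μ t < 1} := ⟨ht, hcase t⟩
      have hmono := hdfr x hx h0A htA ht
      simp only [zero_add] at hmono
      have hS0 : 0 < 1 - cdf μ 0 := by linarith [hcase 0]
      have hSt : 0 < 1 - cdf μ t := by linarith [hcase t]
      have hSx : 0 ≤ 1 - cdf μ x := by linarith [cdf_le_one μ x]
      have h1 : 1 - cdf μ x ≤ (1 - cdf μ x) / (1 - cdf μ 0) := by
        rw [le_div_iff₀ hS0]
        exact mul_le_of_le_one_right hSx (by linarith [cdf_nonneg μ 0])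
      have h2 : 1 - cdf μ x ≤ (1 - cdf μ (t + x)) / (1 - cdf μ t) := le_trans h1 hmono
      calc S t * S x ≤ S t * ((1 - cdf μ (t + x)) / (1 - cdf μ t)) :=
            mul_le_mul_of_nonneg_left (by simpa only [hS] using h2) (hSnn t)
        _ = 1 - cdf μ (t + x) := by simp only [hS]; field_simp
        _ = S (t + x) := by simp only [hS]
    -- powers
    have hpow1 : ∀ x, 0 ≤ x → ∀ n : ℕ, S x ^ (n+1) ≤ S (((n:ℝ)+1)*x) := by
      intro x hx n
      induction n with
      | zero => simp
      | succ m ih =>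
        have hstep := hNWU x hx (((m:ℝ)+1)*x) (by positivity)
        have hchain : S x ^ (m+1) * S x ≤ S (((m:ℝ)+1)*x + x) :=
          le_trans (mul_le_mul_of_nonneg_right ih (hSnn x)) hstep
        have harg : ((m:ℝ)+1)*x + x = (((m+1:ℕ):ℝ)+1)*x := by push_cast; ring
        rw [harg] at hchain
        calc S x ^ (m+1+1) = S x ^ (m+1) * S x := by ring
          _ ≤ _ := hchain
    have hpow : ∀ x, 0 ≤ x → ∀ n : ℕ, S x ^ (n+2) ≤ S (((n:ℝ)+2)*x) := by
      intro x hx n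
      have h := hpow1 x hx (n+1)
      have he : S x ^ (n+1+1) = S x ^ (n+2) := by norm_num
      have harg : (((n+1:ℕ):ℝ)+1)*x = ((n:ℝ)+2)*x := by push_cast; ring
      rw [he, harg] at h
      exact h
    -- integrability of S on (0, ∞)
    have hS_int : IntegrableOn S (Ioi 0) volume := by
      have h1 : IntegrableOn S (Ioc 0 1) volume := by
        refine Integrable.mono' (integrable_const 1) hSmeas.aestronglyMeasurable ?_
        refine Filter.Eventually.of_forall (fun x => ?_)
        rw [Real.norm_eq_abs, abs_of_nonneg (hSnn x)]
        exact hSle1 x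
      have h2 : IntegrableOn S (Ioi 1) volume := by
        refine Integrable.mono' (hmom2.mono_set (Ioi_subset_Ioi zero_le_one))
          hSmeas.aestronglyMeasurable ?_
        rw [ae_restrict_iff' measurableSet_Ioi]
        refine Filter.Eventually.of_forall (fun x hx => ?_)
        have h1x : (1:ℝ) ≤ x := le_of_lt hx
        rw [Real.norm_eq_abs, abs_of_nonneg (hSnn x)]
        simp only [hS]
        nlinarith [cdf_le_one μ x]
      have h3 := h1.union h2
      rwa [Ioc_union_Ioi_eq_Ioi zero_le_one] at h3
    have hxS_int : IntegrableOn (fun x => x * S x) (Ioi 0) volume := by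
      have h := hmom2.const_mul (2⁻¹ : ℝ)
      refine h.congr (Filter.Eventually.of_forall (fun x => ?_))
      simp only [hS]; ring
    -- the two key estimates
    have hL1 := aux_L1 S hSmeas hSnn hNWU hS_int hxS_int
    obtain ⟨hg_int, hgle⟩ := aux_L2 S hSmeas hSnn hSle1 hpow hS_int
    set I := ∫ x in Ioi (0:ℝ), S x with hI
    have hI0 : 0 ≤ I := setIntegral_nonneg measurableSet_Ioi (fun x _ => hSnn x)
    have hK2J : ∫ x in Ioi (0:ℝ), 2 * x * (1 - cdf μ x)
        = 2 * ∫ x in Ioi (0:ℝ), x * S x := by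
      rw [← integral_const_mul]
      refine setIntegral_congr_fun measurableSet_Ioi (fun x hx => ?_)
      simp only [hS]; ring
    have hM : I ≤ Real.sqrt (∫ x in Ioi (0:ℝ), 2 * x * (1 - cdf μ x)) / Real.sqrt 2 := by
      rw [hK2J, Real.sqrt_mul (by norm_num : (0:ℝ) ≤ 2),
        mul_div_cancel_left₀ _ (by positivity : Real.sqrt 2 ≠ 0)]
      have h := Real.sqrt_le_sqrt hL1
      rwa [Real.sqrt_sq hI0] at h
    have hint_eq : ∫ x in Ioi (0:ℝ), cdf μ x * Real.log (cdf μ x)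
        = (∫ x in Ioi (0:ℝ), (S x + (1 - S x) * Real.log (1 - S x))) - I := by
      rw [hI, ← integral_sub hg_int hS_int]
      refine setIntegral_congr_fun measurableSet_Ioi (fun x hx => ?_)
      simp only [hS]; ring_nf
    have hgoal1 : ∫ x in Ioi (0:ℝ), cdf μ x * Real.log (cdf μ x) ≤ I * (2 - π^2/6) - I := by
      rw [hint_eq]; linarith [hgle]
    have hmul : I * (2 - π^2/6)
        ≤ Real.sqrt (∫ x in Ioi (0:ℝ), 2 * x * (1 - cdf μ x)) / Real.sqrt 2 * (2 - π^2/6) :=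
      mul_le_mul_of_nonneg_right hM hc
    rw [ge_iff_le]
    linarith [hgoal1, hmul]
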